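/- arXiv:1902.03851 — 6 statements merged into one kernel-verified Lean document; each statement's English description precedes it below -/
import Mathlib

section
/- Let n be a positive integer and let α ∈ ℂ be a primitive 3n-th root of unity. Then Σ_{k=-n}^{n-1} (-1)^k · α^{3k(k+1)/2} / (1 - α^{3k+1}) = 0. (All denominators are nonzero since 3k+1 is never divisible by 3n for −n ≤ k ≤ n−1.) -/
/-- Abstract cancellation: if `g (k + n) = - g k` for all `k`, the sum over a
full window of length `2n` vanishes. -/
lemma aux_sum_shift (g : ℤ → ℂ) (n : ℕ) (h : ∀ k : ℤ, g (k + n) = - g k) :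
    ∑ k ∈ Finset.Icc (-(n : ℤ)) ((n : ℤ) - 1), g k = 0 := by
  have hIcc : Finset.Icc (-(n : ℤ)) ((n : ℤ) - 1) = Finset.Ico (-(n : ℤ)) n := by
    ext x; simp
  have hsplit : Finset.Ico (-(n : ℤ)) (n : ℤ) =
      Finset.Ico (-(n : ℤ)) 0 ∪ Finset.Ico (0 : ℤ) n := by
    rw [Finset.Ico_union_Ico_eq_Ico (by omega) (by positivity)]
  have hdisj : Disjoint (Finset.Ico (-(n : ℤ)) 0) (Finset.Ico (0 : ℤ) n) :=
    Finset.Ico_disjoint_Ico_consecutive _ _ _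
  rw [hIcc, hsplit, Finset.sum_union hdisj]
  have hshift : ∑ k ∈ Finset.Ico (0 : ℤ) n, g k
      = ∑ k ∈ Finset.Ico (-(n : ℤ)) 0, g (k + n) := by
    have hmap : Finset.Ico (0 : ℤ) n =
        Finset.map (addRightEmbedding (n : ℤ)) (Finset.Ico (-(n : ℤ)) 0) := by
      rw [Finset.map_add_right_Ico]; norm_num
    rw [hmap, Finset.sum_map]
    rfl
  rw [hshift, ← Finset.sum_add_distrib]
  apply Finset.sum_eq_zero
  intro k _
  rw [h k]; ring

/-- The key sign: `(-1)^n * α^(3 n (n+1) / 2) = -1`. -/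
lemma aux_sign (n : ℕ) (hn : 0 < n) (α : ℂ) (hα : IsPrimitiveRoot α (3 * n))
    (b : ℤ) (hb : (n : ℤ) * ((n : ℤ) + 1) = b + b) :
    (-1 : ℂ) ^ (n : ℕ) * α ^ (3 * b) = -1 := by
  have hα0 : α ≠ 0 := hα.ne_zero (by positivity)
  rcases Nat.even_or_odd n with ⟨m, hm⟩ | ⟨m, hm⟩
  · -- n = m + m, so α^(3m) = -1 and 3b = 3m(2m+1)
    have hm0 : 0 < m := by omega
    have hsq : (α ^ (3 * m)) ^ 2 = 1 := by
      rw [← pow_mul, show 3 * m * 2 = 3 * n by omega, hα.pow_eq_one]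
    have hne : α ^ (3 * m) ≠ 1 :=
      hα.pow_ne_one_of_pos_of_lt (by omega) (by omega)
    have hneg1 : α ^ (3 * m) = -1 := by
      have : (α ^ (3 * m) - 1) * (α ^ (3 * m) + 1) = 0 := by
        linear_combination hsq
      rcases mul_eq_zero.mp this with h | h
      · exact absurd (by linear_combination h) hne
      · linear_combination h
    have hb3 : 3 * b = 3 * (m : ℤ) * (2 * m + 1) := by
      have hnm : (n : ℤ) = m + m := by exact_mod_cast hm
      rw [hnm] at hb; linarith [hb]
    have hz : α ^ (3 * (m : ℤ)) = -1 := by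
      rw [show (3 * (m : ℤ)) = ((3 * m : ℕ) : ℤ) by push_cast; ring,
        zpow_natCast, hneg1]
    rw [hb3, zpow_mul, hz, Even.neg_one_pow ⟨m, hm⟩, one_mul]
    exact Odd.neg_one_zpow ⟨m, by ring⟩
  · -- n = 2m+1, so 3b = 3n(m+1) and α^(3b) = 1
    have hb3 : 3 * b = 3 * (n : ℤ) * ((m : ℤ) + 1) := by
      have hnm : (n : ℤ) = 2 * m + 1 := by exact_mod_cast hm
      rw [hnm] at hb ⊢; linarith [hb]
    have hz : α ^ (3 * (n : ℤ)) = 1 := by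
      rw [show (3 * (n : ℤ)) = ((3 * n : ℕ) : ℤ) by push_cast; ring,
        zpow_natCast, hα.pow_eq_one]
    rw [hb3, zpow_mul, hz, one_zpow, Odd.neg_one_pow ⟨m, by omega⟩]
    ring

theorem stmt_3 (n : ℕ) (hn : 0 < n) (α : ℂ) (hα : IsPrimitiveRoot α (3 * n)) :
    ∑ k ∈ Finset.Icc (-(n : ℤ)) ((n : ℤ) - 1),
      (-1 : ℂ) ^ k * α ^ ((3 * k * (k + 1)) / 2) / (1 - α ^ (3 * k + 1)) = 0 := by
  have hα0 : α ≠ 0 := hα.ne_zero (by positivity)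
  have hz : α ^ (3 * (n : ℤ)) = 1 := by
    rw [show (3 * (n : ℤ)) = ((3 * n : ℕ) : ℤ) by push_cast; ring,
      zpow_natCast, hα.pow_eq_one]
  obtain ⟨b, hb⟩ := Int.even_mul_succ_self (n : ℤ)
  have hsign := aux_sign n hn α hα b hb
  apply aux_sum_shift
    (fun k => (-1 : ℂ) ^ k * α ^ ((3 * k * (k + 1)) / 2) / (1 - α ^ (3 * k + 1))) n
  intro k
  show (-1 : ℂ) ^ (k + (n:ℤ)) * α ^ ((3 * (k + (n:ℤ)) * ((k + (n:ℤ)) + 1)) / 2) /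
      (1 - α ^ (3 * (k + (n:ℤ)) + 1))
    = -((-1 : ℂ) ^ k * α ^ ((3 * k * (k + 1)) / 2) / (1 - α ^ (3 * k + 1)))
  obtain ⟨a, ha⟩ := Int.even_mul_succ_self k
  -- exponents
  have hEk : (3 * k * (k + 1)) / 2 = 3 * a := by
    rw [show 3 * k * (k + 1) = 2 * (3 * a) by linear_combination 3 * ha]
    exact Int.mul_ediv_cancel_left _ two_ne_zero
  have hEkn : (3 * (k + (n : ℤ)) * ((k + (n : ℤ)) + 1)) / 2
      = 3 * a + 3 * (n : ℤ) * k + 3 * b := by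
    rw [show 3 * (k + (n : ℤ)) * ((k + (n : ℤ)) + 1)
        = 2 * (3 * a + 3 * (n : ℤ) * k + 3 * b) by
      linear_combination 3 * ha + 3 * hb]
    exact Int.mul_ediv_cancel_left _ two_ne_zero
  have h1 : α ^ (3 * a + 3 * (n : ℤ) * k + 3 * b)
      = α ^ (3 * a) * α ^ (3 * b) := by
    rw [zpow_add₀ hα0, zpow_add₀ hα0, zpow_mul α (3 * (n : ℤ)) k, hz,
      one_zpow, mul_one]
  have h2 : α ^ (3 * (k + (n : ℤ)) + 1) = α ^ (3 * k + 1) := by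
    rw [show 3 * (k + (n : ℤ)) + 1 = (3 * k + 1) + 3 * (n : ℤ) by ring,
      zpow_add₀ hα0, hz, mul_one]
  have h3 : (-1 : ℂ) ^ (k + (n : ℤ)) = (-1 : ℂ) ^ k * (-1 : ℂ) ^ (n : ℕ) := by
    rw [zpow_add₀ (by norm_num : (-1 : ℂ) ≠ 0), zpow_natCast]
  rw [hEkn, hEk, h1, h2, h3]
  rw [show (-1 : ℂ) ^ k * (-1 : ℂ) ^ (n : ℕ) * (α ^ (3 * a) * α ^ (3 * b))
      = -((-1 : ℂ) ^ k * α ^ (3 * a)) by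
    linear_combination ((-1 : ℂ) ^ k * α ^ (3 * a)) * hsign]
  rw [neg_div]
end

section
/- Let n be a positive integer and let ζ ∈ ℂ be a primitive (3n+1)-th root of unity. Then Σ_{k=1}^{n} 1/(1 - ζ^{3k-1}) = n/2. (All denominators are nonzero since 3k−1 is never divisible by 3n+1 for 1 ≤ k ≤ n.) -/
theorem stmt_6 (n : ℕ) (hn : 0 < n) (ζ : ℂ) (hζ : IsPrimitiveRoot ζ (3 * n + 1)) :
    ∑ k ∈ Finset.Icc 1 n, 1 / (1 - ζ ^ (3 * k - 1)) = (n : ℂ) / 2 := by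
  have key : ∀ a b : ℕ, a + b = 3 * n + 1 → 0 < a → a < 3 * n + 1 →
      1 / (1 - ζ ^ a) + 1 / (1 - ζ ^ b) = 1 := by
    intro a b hab ha0 ha1
    have hza : ζ ^ a ≠ 1 := hζ.pow_ne_one_of_pos_of_lt ha0.ne' ha1
    have hzb : ζ ^ b ≠ 1 := hζ.pow_ne_one_of_pos_of_lt (by omega) (by omega)
    have hzw : ζ ^ a * ζ ^ b = 1 := by
      rw [← pow_add, hab, hζ.pow_eq_one]
    have h1 : (1 : ℂ) - ζ ^ a ≠ 0 := sub_ne_zero.mpr (Ne.symm hza)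
    have h2 : (1 : ℂ) - ζ ^ b ≠ 0 := sub_ne_zero.mpr (Ne.symm hzb)
    field_simp
    linear_combination -hzw
  have hS : ∑ k ∈ Finset.Icc 1 n, 1 / (1 - ζ ^ (3 * k - 1))
      = ∑ i ∈ Finset.range n, 1 / (1 - ζ ^ (3 * (1 + i) - 1)) := by
    rw [← Finset.Ico_add_one_right_eq_Icc, Finset.sum_Ico_eq_sum_range]
    simp
  rw [hS]
  set f : ℕ → ℂ := fun i => 1 / (1 - ζ ^ (3 * (1 + i) - 1)) with hf
  have hrefl : ∑ i ∈ Finset.range n, f i = ∑ i ∈ Finset.range n, f (n - 1 - i) :=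
    (Finset.sum_range_reflect f n).symm
  have h2S : (∑ i ∈ Finset.range n, f i) + (∑ i ∈ Finset.range n, f i) = (n : ℂ) := by
    nth_rewrite 2 [hrefl]
    rw [← Finset.sum_add_distrib]
    have : ∀ i ∈ Finset.range n, f i + f (n - 1 - i) = 1 := by
      intro i hi
      simp only [Finset.mem_range] at hi
      simp only [hf]
      exact key _ _ (by omega) (by omega) (by omega)
    rw [Finset.sum_congr rfl this]
    simp
  rw [eq_div_iff (by norm_num : (2:ℂ) ≠ 0), mul_two]
  exact h2S
end

section
/- Let n be a positive integer and let ω ∈ ℂ be a primitive (3n+2)-th root of unity. Then Σ_{k=1}^{3n+1} (ω^k − ω^{2k}) / (1 − ω^{3k}) = −(n+1). (All denominators are nonzero since 3k is never divisible by 3n+2 for 1 ≤ k ≤ 3n+1.) -/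
theorem stmt_7 (n : ℕ) (hn : 0 < n) (ω : ℂ) (hω : IsPrimitiveRoot ω (3 * n + 2)) :
    ∑ k ∈ Finset.Icc 1 (3 * n + 1),
      (ω ^ k - ω ^ (2 * k)) / (1 - ω ^ (3 * k)) = -((n : ℂ) + 1) := by
  have hω1 : ω ^ (3 * n + 2) = 1 := hω.pow_eq_one
  have key : ∀ m : ℕ, 0 < m → m < 3 * n + 2 → ω ^ m ≠ 1 := fun m h1 h2 =>
    hω.pow_ne_one_of_pos_of_lt h1.ne' h2
  have h3k : ∀ k ∈ Finset.Icc 1 (3 * n + 1), ω ^ (3 * k) ≠ 1 := by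
    intro k hk
    simp only [Finset.mem_Icc] at hk
    intro h
    rw [hω.pow_eq_one_iff_dvd] at h
    obtain ⟨m, hm⟩ := h
    have hm3 : m < 3 := by nlinarith
    interval_cases m <;> omega
  have step : ∀ k ∈ Finset.Icc 1 (3 * n + 1),
      (ω ^ k - ω ^ (2 * k)) / (1 - ω ^ (3 * k))
        = ∑ j ∈ Finset.range (n + 1), ω ^ ((3 * j + 1) * k) := by
    intro k hk
    have hx : ω ^ (3 * k) ≠ 1 := h3k k hk
    have hgeom := geom_sum_eq hx (n + 1)
    have hsum : ∑ j ∈ Finset.range (n + 1), ω ^ ((3 * j + 1) * k)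
        = ω ^ k * ∑ j ∈ Finset.range (n + 1), (ω ^ (3 * k)) ^ j := by
      rw [Finset.mul_sum]
      refine Finset.sum_congr rfl fun j _ => ?_
      rw [← pow_mul, ← pow_add]
      ring_nf
    have hxn : (ω ^ (3 * k)) ^ (n + 1) = ω ^ k := by
      rw [← pow_mul]
      have : 3 * k * (n + 1) = (3 * n + 2) * k + k := by ring
      rw [this, pow_add, pow_mul, hω1, one_pow, one_mul]
    rw [hsum, hgeom, hxn]
    have hx1 : (1 : ℂ) - ω ^ (3 * k) ≠ 0 := sub_ne_zero.mpr (Ne.symm hx)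
    have hx2 : ω ^ (3 * k) - 1 ≠ 0 := sub_ne_zero.mpr hx
    field_simp
    ring_nf
  rw [Finset.sum_congr rfl step, Finset.sum_comm]
  have inner : ∀ j ∈ Finset.range (n + 1),
      ∑ k ∈ Finset.Icc 1 (3 * n + 1), ω ^ ((3 * j + 1) * k) = -1 := by
    intro j hj
    simp only [Finset.mem_range] at hj
    set ζ := ω ^ (3 * j + 1) with hζ
    have hζ1 : ζ ≠ 1 := key _ (by omega) (by omega)
    have hζn : ζ ^ (3 * n + 2) = 1 := by
      rw [hζ, ← pow_mul, mul_comm, pow_mul, hω1, one_pow]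
    have htot : ∑ k ∈ Finset.range (3 * n + 2), ζ ^ k = 0 := by
      rw [geom_sum_eq hζ1, hζn, sub_self, zero_div]
    have hsplit : ∑ k ∈ Finset.range (3 * n + 2), ζ ^ k
        = (∑ k ∈ Finset.range (3 * n + 1), ζ ^ (k + 1)) + ζ ^ 0 :=
      Finset.sum_range_succ' _ _
    have hicc : ∑ k ∈ Finset.Icc 1 (3 * n + 1), ω ^ ((3 * j + 1) * k)
        = ∑ k ∈ Finset.range (3 * n + 1), ζ ^ (k + 1) := by
      have : Finset.Icc 1 (3 * n + 1) = Finset.Ico 1 (3 * n + 2) := by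
        ext x; simp; omega
      rw [this, Finset.sum_Ico_eq_sum_range]
      have h1 : 3 * n + 2 - 1 = 3 * n + 1 := by omega
      rw [h1]
      refine Finset.sum_congr rfl fun k _ => ?_
      rw [hζ, ← pow_mul]
      ring_nf
    rw [hicc]
    have := htot
    rw [hsplit] at this
    simpa using by linear_combination this
  rw [Finset.sum_congr rfl inner]
  simp
end

section
/- Let n be a positive integer and let k be an integer with 1 ≤ k ≤ n−1. Then in ℤ[q], the polynomial Φ_n(q)² divides q^{k(k-1)/2} · (1 − q^k) · [2n choose k]_q − 2·(q^n − 1)·(−1)^k. -/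
open Polynomial

/-- The q-shifted factorial `(q; q)_n = (1-q)(1-q^2)⋯(1-q^n)` in `ℤ[q]`. -/
noncomputable def qPoch (n : ℕ) : Polynomial ℤ := ∏ i ∈ Finset.range n, (1 - X ^ (i + 1))

lemma prod_sub_prod_dvd {ι R : Type*} [CommRing R] (d : R) (s : Finset ι)
    (f g : ι → R) (h : ∀ i ∈ s, d ∣ f i - g i) :
    d ∣ (∏ i ∈ s, f i) - ∏ i ∈ s, g i := by
  classical
  induction s using Finset.induction_on with
  | empty => simp
  | @insert a s hx ih =>
    rw [Finset.prod_insert hx, Finset.prod_insert hx]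
    have h1 : d ∣ f a - g a := h a (Finset.mem_insert_self a s)
    have h2 : d ∣ (∏ i ∈ s, f i) - ∏ i ∈ s, g i :=
      ih fun i hi => h i (Finset.mem_insert_of_mem hi)
    have hre : f a * ∏ i ∈ s, f i - g a * ∏ i ∈ s, g i
        = (f a - g a) * ∏ i ∈ s, f i + g a * ((∏ i ∈ s, f i) - ∏ i ∈ s, g i) := by ring
    rw [hre]
    exact dvd_add (h1.mul_right _) (h2.mul_left _)

lemma qPoch_ne_zero (m : ℕ) : qPoch m ≠ 0 := by
  unfold qPoch
  rw [Finset.prod_ne_zero_iff]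
  intro i _ h
  have h0 := congrArg (fun p => Polynomial.coeff p 0) h
  simp [coeff_X_pow] at h0

lemma cyclotomic_not_dvd_qPoch {n j : ℕ} (hn : 0 < n) (hj : j < n) :
    ¬ Polynomial.cyclotomic n ℤ ∣ qPoch j := by
  intro h
  have hprime : Prime (cyclotomic n ℤ) :=
    UniqueFactorizationMonoid.irreducible_iff_prime.mp (cyclotomic.irreducible hn)
  obtain ⟨i, hi, hdvd⟩ := hprime.exists_mem_finset_dvd h
  rw [Finset.mem_range] at hi
  have hdvd' : cyclotomic n ℤ ∣ (X : Polynomial ℤ) ^ (i + 1) - 1 := by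
    have := hdvd.neg_right
    rwa [neg_sub] at this
  have hmap : cyclotomic n ℂ ∣ (X : Polynomial ℂ) ^ (i + 1) - 1 := by
    have := Polynomial.map_dvd (Int.castRingHom ℂ) hdvd'
    simpa [Polynomial.map_cyclotomic] using this
  have hζ : IsPrimitiveRoot (Complex.exp (2 * Real.pi * Complex.I / n)) n :=
    Complex.isPrimitiveRoot_exp n hn.ne'
  haveI : NeZero ((n : ℂ)) := ⟨by exact_mod_cast hn.ne'⟩
  have hroot : (cyclotomic n ℂ).IsRoot (Complex.exp (2 * Real.pi * Complex.I / n)) :=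
    (Polynomial.isRoot_cyclotomic_iff).mpr hζ
  obtain ⟨c, hc⟩ := hmap
  have heval := congrArg (fun p => Polynomial.eval (Complex.exp (2 * Real.pi * Complex.I / n)) p) hc
  simp only [eval_sub, eval_pow, eval_X, eval_one, eval_mul] at heval
  rw [hroot, zero_mul] at heval
  have hone : (Complex.exp (2 * Real.pi * Complex.I / n)) ^ (i + 1) = 1 :=
    sub_eq_zero.mp heval
  have hd := (hζ.pow_eq_one_iff_dvd (i + 1)).mp hone
  have := Nat.le_of_dvd (by omega) hd
  omega

theorem stmt_8 (n k : ℕ) (hn : 0 < n) (hk : 1 ≤ k) (hk' : k ≤ n - 1)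
    (B : ℕ → ℕ → Polynomial ℤ)
    (hB : ∀ m j : ℕ, j ≤ m → B m j * (qPoch j * qPoch (m - j)) = qPoch m)
    (hB' : ∀ m j : ℕ, m < j → B m j = 0) :
    (Polynomial.cyclotomic n ℤ) ^ 2 ∣
      X ^ (k * (k - 1) / 2) * (1 - X ^ k) * B (2 * n) k -
        2 * (X ^ n - 1) * (-1 : Polynomial ℤ) ^ k := by
  obtain ⟨m, rfl⟩ : ∃ m, k = m + 1 := ⟨k - 1, by omega⟩
  have hkn : m + 1 < n := by omega
  simp only [Nat.add_sub_cancel]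
  set Φ := Polynomial.cyclotomic n ℤ with hΦdef
  have hprime : Prime Φ :=
    UniqueFactorizationMonoid.irreducible_iff_prime.mp (cyclotomic.irreducible hn)
  have hΦn : Φ ∣ (X : Polynomial ℤ) ^ n - 1 := cyclotomic.dvd_X_pow_sub_one n ℤ
  have hΦ2n : Φ ∣ (X : Polynomial ℤ) ^ (2 * n) - 1 := by
    have h : ((X : Polynomial ℤ) ^ (2 * n) - 1) = (X ^ n - 1) * (X ^ n + 1) := by
      rw [two_mul, pow_add]; ring
    rw [h]; exact hΦn.mul_right _
  -- sums
  have hsum : (∑ i ∈ Finset.range m, (m - i)) = (m + 1) * m / 2 := by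
    have h1 : (∑ i ∈ Finset.range m, (m - i)) = ∑ i ∈ Finset.range m, (i + 1) := by
      rw [← Finset.sum_range_reflect (fun i => i + 1) m]
      exact Finset.sum_congr rfl fun j hj => by rw [Finset.mem_range] at hj; omega
    have h2 : (∑ i ∈ Finset.range m, (i + 1)) = ∑ i ∈ Finset.range (m + 1), i := by
      rw [Finset.sum_range_succ' (fun i => i) m]; simp
    rw [h1, h2, Finset.sum_range_id, Nat.add_sub_cancel]
  set P' : Polynomial ℤ := ∏ i ∈ Finset.range m, (1 - X ^ (2 * n - (m + 1) + i + 1)) with hP'def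
  set P : Polynomial ℤ := ∏ i ∈ Finset.range (m + 1), (1 - X ^ (2 * n - (m + 1) + i + 1)) with hPdef
  -- key congruence
  have hA : (∏ i ∈ Finset.range m,
      ((X : Polynomial ℤ) ^ (m - i) * (1 - X ^ (2 * n - (m + 1) + i + 1))))
      = X ^ ((m + 1) * m / 2) * P' := by
    rw [Finset.prod_mul_distrib, Finset.prod_pow_eq_pow_sum, hsum]
  have hBprod : (∏ i ∈ Finset.range m, (-(1 - (X : Polynomial ℤ) ^ (m - i))))
      = (-1 : Polynomial ℤ) ^ m * qPoch m := by
    have h1 : (∏ i ∈ Finset.range m, (-(1 - (X : Polynomial ℤ) ^ (m - i))))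
        = (∏ i ∈ Finset.range m, (-1 : Polynomial ℤ)) *
          ∏ i ∈ Finset.range m, (1 - (X : Polynomial ℤ) ^ (m - i)) := by
      rw [← Finset.prod_mul_distrib]
      exact Finset.prod_congr rfl fun j _ => by ring
    rw [h1, Finset.prod_const, Finset.card_range]
    congr 1
    rw [qPoch, ← Finset.prod_range_reflect (fun i => 1 - (X : Polynomial ℤ) ^ (i + 1)) m]
    exact Finset.prod_congr rfl fun j hj => by
      rw [Finset.mem_range] at hj
      rw [show m - 1 - j + 1 = m - j from by omega]
  have hKey : Φ ∣ X ^ ((m + 1) * m / 2) * P' - (-1 : Polynomial ℤ) ^ m * qPoch m := by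
    rw [← hA, ← hBprod]
    apply prod_sub_prod_dvd
    intro i hi
    rw [Finset.mem_range] at hi
    have hexp : (m - i) + (2 * n - (m + 1) + i + 1) = 2 * n := by omega
    have hx : (X : Polynomial ℤ) ^ (m - i) * X ^ (2 * n - (m + 1) + i + 1) = X ^ (2 * n) := by
      rw [← pow_add, hexp]
    have hre : (X : Polynomial ℤ) ^ (m - i) * (1 - X ^ (2 * n - (m + 1) + i + 1))
        - (-(1 - X ^ (m - i))) = -(X ^ (2 * n) - 1) := by
      linear_combination -hx
    rw [hre]
    exact hΦ2n.neg_right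
  -- product splittings
  have hsplit : qPoch (2 * n) = qPoch (2 * n - (m + 1)) * P := by
    rw [hPdef, qPoch, qPoch]
    conv_lhs => rw [show 2 * n = (2 * n - (m + 1)) + (m + 1) from by omega]
    rw [Finset.prod_range_add]
  have hPsplit : P = P' * (1 - X ^ (2 * n)) := by
    rw [hPdef, Finset.prod_range_succ, show 2 * n - (m + 1) + m + 1 = 2 * n from by omega, hP'def]
  have hQk : qPoch (m + 1) = qPoch m * (1 - X ^ (m + 1)) := by
    rw [qPoch, Finset.prod_range_succ, qPoch]
  have hQB : qPoch (m + 1) * B (2 * n) (m + 1) = P := by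
    apply mul_right_cancel₀ (qPoch_ne_zero (2 * n - (m + 1)))
    have h := hB (2 * n) (m + 1) (by omega)
    rw [hsplit] at h
    linear_combination h
  -- assemble
  set E : Polynomial ℤ := X ^ ((m + 1) * m / 2) * (1 - X ^ (m + 1)) * B (2 * n) (m + 1) -
      2 * (X ^ n - 1) * (-1 : Polynomial ℤ) ^ (m + 1) with hEdef
  have hnotdvd : ¬ Φ ∣ qPoch (m + 1) := cyclotomic_not_dvd_qPoch hn hkn
  apply hprime.pow_dvd_of_dvd_mul_left 2 hnotdvd
  set br : Polynomial ℤ :=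
    X ^ ((m + 1) * m / 2) * (X ^ n + 1) * P' + 2 * (-1 : Polynomial ℤ) ^ (m + 1) * qPoch m
    with hbrdef
  have hkey : qPoch (m + 1) * E = (X ^ n - 1) * (-(1 - X ^ (m + 1)) * br) := by
    rw [hEdef, hbrdef]
    calc qPoch (m + 1) * (X ^ ((m + 1) * m / 2) * (1 - X ^ (m + 1)) * B (2 * n) (m + 1) -
          2 * (X ^ n - 1) * (-1 : Polynomial ℤ) ^ (m + 1))
        = X ^ ((m + 1) * m / 2) * (1 - X ^ (m + 1)) * (qPoch (m + 1) * B (2 * n) (m + 1)) -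
          2 * (X ^ n - 1) * (-1 : Polynomial ℤ) ^ (m + 1) * (qPoch m * (1 - X ^ (m + 1))) := by
          rw [← hQk]; ring
      _ = X ^ ((m + 1) * m / 2) * (1 - X ^ (m + 1)) * (P' * (1 - X ^ (2 * n))) -
          2 * (X ^ n - 1) * (-1 : Polynomial ℤ) ^ (m + 1) * (qPoch m * (1 - X ^ (m + 1))) := by
          rw [hQB, hPsplit]
      _ = (X ^ n - 1) * (-(1 - X ^ (m + 1)) *
          (X ^ ((m + 1) * m / 2) * (X ^ n + 1) * P' +
            2 * (-1 : Polynomial ℤ) ^ (m + 1) * qPoch m)) := by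
          rw [show (X : Polynomial ℤ) ^ (2 * n) = X ^ n * X ^ n from by rw [two_mul, pow_add]]
          ring
  have hbr : Φ ∣ br := by
    have hre : br = X ^ ((m + 1) * m / 2) * P' * (X ^ n - 1) +
        2 * (X ^ ((m + 1) * m / 2) * P' - (-1 : Polynomial ℤ) ^ m * qPoch m) := by
      rw [hbrdef]; ring
    rw [hre]
    exact dvd_add (hΦn.mul_left _) (hKey.mul_left _)
  rw [hkey, sq]
  exact mul_dvd_mul hΦn (hbr.mul_left _)
end

section
/- Let p ≥ 5 be a prime. Then Σ_{i=0}^{p-1} Σ_{j=0}^{p-1} (binomial(i+j, i))² ≡ χ(p) (mod p²), where the congruence is between integers. -/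
/-- `R[ω]` with `ω^2 = -1 - ω` (Eisenstein-style quadratic extension). -/
structure Eis (R : Type) where
  a : R
  b : R

namespace Eis

variable {R : Type} [CommRing R]

instance : Zero (Eis R) := ⟨⟨0, 0⟩⟩
instance : One (Eis R) := ⟨⟨1, 0⟩⟩
instance : Add (Eis R) := ⟨fun x y => ⟨x.a + y.a, x.b + y.b⟩⟩
instance : Neg (Eis R) := ⟨fun x => ⟨-x.a, -x.b⟩⟩
instance : Mul (Eis R) := ⟨fun x y => ⟨x.a * y.a - x.b * y.b, x.a * y.b + x.b * y.a - x.b * y.b⟩⟩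

@[simp] lemma zero_def : (0 : Eis R) = ⟨0, 0⟩ := rfl
@[simp] lemma one_def : (1 : Eis R) = ⟨1, 0⟩ := rfl
@[simp] lemma add_def (x y : Eis R) : x + y = ⟨x.a + y.a, x.b + y.b⟩ := rfl
@[simp] lemma neg_def (x : Eis R) : -x = ⟨-x.a, -x.b⟩ := rfl
@[simp] lemma mul_def (x y : Eis R) :
    x * y = ⟨x.a * y.a - x.b * y.b, x.a * y.b + x.b * y.a - x.b * y.b⟩ := rfl

instance : CommRing (Eis R) where
  add_assoc x y z := by simp [add_assoc]
  zero_add x := by simp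
  add_zero x := by simp
  add_comm x y := by simp [add_comm]
  neg_add_cancel x := by simp
  mul_assoc x y z := by simp; constructor <;> ring
  one_mul x := by simp
  mul_one x := by simp
  left_distrib x y z := by simp; constructor <;> ring
  right_distrib x y z := by simp; constructor <;> ring
  zero_mul x := by simp
  mul_zero x := by simp
  mul_comm x y := by simp; constructor <;> ring
  nsmul := nsmulRec
  zsmul := zsmulRec

lemma natCast_def (n : ℕ) : (n : Eis R) = ⟨(n : R), 0⟩ := by
  induction n with
  | zero => rw [Nat.cast_zero, Nat.cast_zero]; rfl
  | succ k ih =>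
    have : ((k+1 : ℕ) : Eis R) = (k : Eis R) + 1 := by push_cast; ring
    rw [this, ih]
    simp

/-- the generator -/
def om : Eis R := ⟨0, 1⟩

lemma om_pow_three : (om : Eis R) ^ 3 = 1 := by
  rw [pow_succ, pow_two]
  simp [om]

lemma om_pow (j : ℕ) : (om : Eis R) ^ j = om ^ (j % 3) := by
  conv_lhs => rw [← Nat.div_add_mod j 3]
  rw [pow_add, pow_mul, om_pow_three, one_pow, one_mul]

lemma om_sq : (om : Eis R) ^ 2 = ⟨-1, -1⟩ := by
  rw [pow_two]
  simp [om]

end Eis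

namespace Eis

variable {R : Type} [CommRing R]

/-- second component as additive hom -/
def sndHom : Eis R →+ R where
  toFun := Eis.b
  map_zero' := rfl
  map_add' _ _ := rfl

@[simp] lemma sndHom_apply (x : Eis R) : sndHom x = x.b := rfl

lemma om_mul_cast (k n : ℕ) :
    (om : Eis R) ^ k * (n : Eis R)
      = ⟨(n : R) * (if k % 3 = 0 then 1 else if k % 3 = 2 then -1 else 0),
         (n : R) * (if k % 3 = 1 then 1 else if k % 3 = 2 then -1 else 0)⟩ := by
  rw [om_pow, natCast_def]
  have h : k % 3 = 0 ∨ k % 3 = 1 ∨ k % 3 = 2 := by omega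
  rcases h with h | h | h <;> rw [h] <;> simp [om, pow_succ, pow_zero]

theorem key_sum (p : ℕ) (hodd : Odd p) :
    ∑ k ∈ Finset.range (p+1),
        (p.choose k : R) * (if k % 3 = 1 then 1 else if k % 3 = 2 then -1 else 0)
      = (if p % 3 = 1 then 1 else if p % 3 = 2 then -1 else 0) := by
  have hb := add_pow (om : Eis R) 1 p
  have hlhs : ((om : Eis R) + 1) ^ p = -(om ^ (2 * p)) := by
    have h1 : (om : Eis R) + 1 = -(om ^ 2) := by rw [om_sq]; simp [om]
    rw [h1, hodd.neg_pow, ← pow_mul]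
  rw [hlhs] at hb
  have hcomp := congrArg sndHom hb.symm
  rw [map_sum] at hcomp
  have hterm : ∀ k ∈ Finset.range (p+1),
      sndHom ((om : Eis R) ^ k * 1 ^ (p - k) * ((p.choose k : ℕ) : Eis R))
        = (p.choose k : R) * (if k % 3 = 1 then 1 else if k % 3 = 2 then -1 else 0) := by
    intro k _
    rw [one_pow, mul_one, om_mul_cast]
    rfl
  rw [Finset.sum_congr rfl hterm] at hcomp
  rw [hcomp]
  rw [om_pow]
  have h3 : ¬ (3 = 0) := by omega
  have h : p % 3 = 0 ∨ p % 3 = 1 ∨ p % 3 = 2 := by omega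
  rcases h with h | h | h <;>
    · have h2 : 2 * p % 3 = (2 * (p % 3)) % 3 := by omega
      rw [h] at h2
      norm_num at h2 ⊢
      rw [h2] <;> try rw [h]
      · simp [om, om_sq, pow_succ, pow_zero]
      all_goals simp [h]

end Eis

section Helpers

variable {M : Type} [AddCommMonoid M]

lemma sum_blocks (h : ℕ → M) (t : ℕ) :
    ∑ k ∈ Finset.range (3*t), h k
      = ∑ i ∈ Finset.range t, (h (3*i) + h (3*i+1) + h (3*i+2)) := by
  induction t with
  | zero => simp
  | succ t ih =>
    have h3 : 3*(t+1) = (3*t+1)+1+1 := by ring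
    rw [h3, Finset.sum_range_succ, Finset.sum_range_succ, Finset.sum_range_succ, ih,
      Finset.sum_range_succ]
    have e1 : 3*t+1+1 = 3*t+2 := by omega
    rw [e1, add_assoc, add_assoc, add_assoc]

lemma triangle_sum (f : ℕ → ℕ → M) (n : ℕ) :
    ∑ i ∈ Finset.range n, ∑ j ∈ Finset.range (n - i), f i j
      = ∑ m ∈ Finset.range n, ∑ k ∈ Finset.range (m+1), f k (m - k) := by
  induction n with
  | zero => simp
  | succ n ih =>
    rw [Finset.sum_range_succ, Finset.sum_range_succ (fun m => ∑ k ∈ Finset.range (m+1), f k (m-k)), ← ih]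
    have hsplit : ∀ i ∈ Finset.range n,
        ∑ j ∈ Finset.range (n + 1 - i), f i j
          = (∑ j ∈ Finset.range (n - i), f i j) + f i (n - i) := by
      intro i hi
      have : n + 1 - i = (n - i) + 1 := by
        have := Finset.mem_range.1 hi; omega
      rw [this, Finset.sum_range_succ]
    rw [Finset.sum_congr rfl hsplit, Finset.sum_add_distrib]
    have hlast : ∑ j ∈ Finset.range (n + 1 - n), f n j = f n 0 := by
      simp
    rw [hlast]
    have hrow : ∑ k ∈ Finset.range (n+1), f k (n - k)
        = (∑ i ∈ Finset.range n, f i (n - i)) + f n (n - n) := Finset.sum_range_succ _ _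
    rw [hrow]
    simp only [Nat.sub_self]
    abel

end Helpers

section Main

/-- ℕ-level partial sums of shifted central binomials -/
def AbN (p e : ℕ) : ℕ := ∑ k ∈ Finset.range p, (2*k).choose (k+e)

lemma pascal2 (m j : ℕ) :
    (m+2).choose (j+2) = m.choose j + (m.choose (j+1) + (m.choose (j+1) + m.choose (j+2))) := by
  rw [show m+2 = (m+1)+1 from rfl, show j+2 = (j+1)+1 from rfl, Nat.choose_succ_succ (m+1),
    Nat.choose_succ_succ m (j+1), Nat.choose_succ_succ m j]
  ring

lemma rec1N (p e : ℕ) :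
    AbN p e + (AbN p (e+1) + (AbN p (e+1) + AbN p (e+2)))
      = AbN p (e+1) + (2*p).choose (p+(e+1)) := by
  have hs := Finset.sum_range_succ' (fun k => (2*k).choose (k+(e+1))) p
  -- hs : ∑_{k<p+1} f k = ∑_{k<p} f (k+1) + f 0
  have hs2 := Finset.sum_range_succ (fun k => (2*k).choose (k+(e+1))) p
  have hterm : ∀ k ∈ Finset.range p,
      (2*(k+1)).choose ((k+1)+(e+1))
        = (2*k).choose (k+e) + ((2*k).choose (k+(e+1)) + ((2*k).choose (k+(e+1)) + (2*k).choose (k+(e+2)))) := by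
    intro k _
    rw [show 2*(k+1) = 2*k+2 by ring, show (k+1)+(e+1) = (k+e)+2 by omega]
    rw [pascal2]
    rw [show (k+e)+1 = k+(e+1) by omega, show (k+e)+2 = k+(e+2) by omega]
  rw [Finset.sum_congr rfl hterm] at hs
  simp only [Finset.sum_add_distrib] at hs
  have h0 : (2*0).choose (0+(e+1)) = 0 := by simp
  rw [h0] at hs
  rw [hs2] at hs
  unfold AbN
  omega

end Main

lemma eps2c {p : ℕ} (hp : p.Prime) {d : ℕ} (hd1 : 1 ≤ d) (hdp : d ≤ p - 1) :
    (((2*p).choose (p+d) : ℕ) : ZMod (p^2)) = 2 * ((p.choose d : ℕ) : ZMod (p^2)) := by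
  have hp2 : 2 ≤ p := hp.two_le
  have hvdm : (2*p).choose (p+d)
      = ∑ k ∈ Finset.range (p+d+1), p.choose k * p.choose (p+d-k) := by
    rw [show 2*p = p + p by ring, Nat.add_choose_eq]
    rw [Finset.Nat.sum_antidiagonal_eq_sum_range_succ_mk]
  rw [hvdm]
  push_cast
  set f : ℕ → ZMod (p^2) := fun k => (p.choose k : ZMod (p^2)) * (p.choose (p+d-k) : ZMod (p^2)) with hf
  have hdmem : d ∈ Finset.range (p+d+1) := by simp
  have hpmem : p ∈ (Finset.range (p+d+1)).erase d := by
    rw [Finset.mem_erase]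
    constructor
    · omega
    · simp
  rw [← Finset.add_sum_erase _ f hdmem, ← Finset.add_sum_erase _ f hpmem]
  have hrest : ∑ k ∈ ((Finset.range (p+d+1)).erase d).erase p, f k = 0 := by
    apply Finset.sum_eq_zero
    intro k hk
    rw [Finset.mem_erase, Finset.mem_erase, Finset.mem_range] at hk
    obtain ⟨hkp, hkd, hkr⟩ := hk
    rcases lt_trichotomy k d with h | h | h
    · -- p + d - k > p
      have : p < p + d - k := by omega
      rw [hf]
      simp only []
      rw [Nat.choose_eq_zero_of_lt this]
      simp
    · exact absurd h hkd
    · rcases lt_trichotomy k p with h2 | h2 | h2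
      · -- d < k < p : both divisible by p
        obtain ⟨x, hx⟩ := hp.dvd_choose_self (by omega : k ≠ 0) h2
        obtain ⟨y, hy⟩ := hp.dvd_choose_self (by omega : p + d - k ≠ 0) (by omega : p + d - k < p)
        rw [hf]
        simp only []
        rw [hx, hy]
        push_cast
        have hpz : ((p : ZMod (p^2)))^2 = 0 := by
          have := ZMod.natCast_self (p^2)
          push_cast at this
          exact this
        calc ((p:ZMod (p^2)) * x) * ((p:ZMod (p^2)) * y)
            = (p:ZMod (p^2))^2 * (x*y) := by ring
          _ = 0 := by rw [hpz, zero_mul]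
      · exact absurd h2 hkp
      · rw [hf]
        simp only []
        rw [Nat.choose_eq_zero_of_lt h2]
        simp
  rw [hrest, add_zero, hf]
  simp only []
  rw [show p + d - d = p by omega, show p + d - p = d by omega]
  rw [Nat.choose_self]
  push_cast
  ring

/-- The Legendre symbol `(p/3)`. -/
def chi (n : ℕ) : ℤ := if n % 3 = 1 then 1 else if n % 3 = 2 then -1 else 0

theorem stmt_15 (p : ℕ) (hp : p.Prime) (hp5 : 5 ≤ p) :
    (∑ i ∈ Finset.range p, ∑ j ∈ Finset.range p, ((i + j).choose i : ℤ) ^ 2)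
      ≡ chi p [ZMOD ((p : ℤ) ^ 2)] := by
  have hp2 : 2 ≤ p := hp.two_le
  have hodd : Odd p := hp.odd_of_ne_two (by omega)
  have hp3 : p % 3 = 1 ∨ p % 3 = 2 := by
    have h0 : p % 3 = 0 ∨ p % 3 = 1 ∨ p % 3 = 2 := by omega
    rcases h0 with h | h | h
    · exfalso
      have h3 : (3 : ℕ) ∣ p := Nat.dvd_of_mod_eq_zero h
      rcases (Nat.Prime.eq_one_or_self_of_dvd hp 3 h3) with h' | h' <;> omega
    · left; exact h
    · right; exact h
  -- switch to ZMod (p^2)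
  have hmod : ((p : ℤ) ^ 2) = ((p^2 : ℕ) : ℤ) := by push_cast; ring
  rw [hmod, ← ZMod.intCast_eq_intCast_iff]
  push_cast
  -- notation
  set q := p^2 with hq
  have hpz : ((p : ZMod q))^2 = 0 := by
    have := ZMod.natCast_self q
    rw [hq] at this ⊢
    push_cast at this
    exact this
  -- Step 1 : reduce double sum to Ab p 0
  have hsq : ∀ i j : ℕ, i < p → j < p → p ≤ i + j →
      (((i+j).choose i : ℕ) : ZMod q)^2 = 0 := by
    intro i j hi hj hij
    obtain ⟨t, ht⟩ := hp.dvd_choose_add hi hj hij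
    rw [ht]
    push_cast
    calc ((p : ZMod q) * t)^2 = (p:ZMod q)^2 * t^2 := by ring
      _ = 0 := by rw [hpz, zero_mul]
  have htrunc : ∀ i ∈ Finset.range p,
      (∑ j ∈ Finset.range p, (((i+j).choose i : ℕ) : ZMod q)^2)
        = ∑ j ∈ Finset.range (p - i), (((i+j).choose i : ℕ) : ZMod q)^2 := by
    intro i hi
    rw [Finset.mem_range] at hi
    refine (Finset.sum_subset (Finset.range_subset_range.2 (by omega : p - i ≤ p)) ?_).symm
    intro j hj hnj
    rw [Finset.mem_range] at hj
    rw [Finset.mem_range] at hnj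
    exact hsq i j hi hj (by omega)
  rw [Finset.sum_congr rfl htrunc, triangle_sum]
  have hinner : ∀ m ∈ Finset.range p,
      (∑ k ∈ Finset.range (m+1), (((k+(m-k)).choose k : ℕ) : ZMod q)^2)
        = (((2*m).choose m : ℕ) : ZMod q) := by
    intro m _
    have hv : (2*m).choose m = ∑ k ∈ Finset.range (m+1), m.choose k * m.choose k := by
      rw [show 2*m = m + m by ring, Nat.add_choose_eq,
        Finset.Nat.sum_antidiagonal_eq_sum_range_succ_mk]
      apply Finset.sum_congr rfl
      intro k hk
      rw [Finset.mem_range] at hk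
      rw [Nat.choose_symm (by omega : k ≤ m)]
    rw [hv]
    push_cast
    apply Finset.sum_congr rfl
    intro k hk
    rw [Finset.mem_range] at hk
    rw [show k + (m - k) = m by omega]
    ring
  rw [Finset.sum_congr rfl hinner]
  -- now goal : ∑ m < p, ((2m).choose m) = chi p in ZMod q
  -- telescoping machinery
  have rec1Z : ∀ e : ℕ,
      ((AbN p e : ℕ) : ZMod q) + ((AbN p (e+1) : ℕ) : ZMod q) + ((AbN p (e+2) : ℕ) : ZMod q)
        = (((2*p).choose (p+(e+1)) : ℕ) : ZMod q) := by
    intro e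
    have := congrArg (fun n : ℕ => (n : ZMod q)) (rec1N p e)
    push_cast at this
    linear_combination this
  have rec3Z : ∀ e : ℕ,
      ((AbN p (e+3) : ℕ) : ZMod q) + (((2*p).choose (p+(e+1)) : ℕ) : ZMod q)
        = ((AbN p e : ℕ) : ZMod q) + (((2*p).choose (p+(e+2)) : ℕ) : ZMod q) := by
    intro e
    have h1 := rec1Z e
    have h2 := rec1Z (e+1)
    rw [show e+1+1 = e+2 by omega, show e+1+2 = e+3 by omega] at h2
    linear_combination h2 - h1
  have tele : ∀ m : ℕ,
      ((AbN p (3*m) : ℕ) : ZMod q) + ∑ i ∈ Finset.range m, (((2*p).choose (p+(3*i+1)) : ℕ) : ZMod q)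
        = ((AbN p 0 : ℕ) : ZMod q) + ∑ i ∈ Finset.range m, (((2*p).choose (p+(3*i+2)) : ℕ) : ZMod q) := by
    intro m
    induction m with
    | zero => simp
    | succ m ih =>
      rw [Finset.sum_range_succ, Finset.sum_range_succ]
      have h3 := rec3Z (3*m)
      rw [show 3*m+1 = 3*m+1 from rfl] at h3
      rw [show 3*(m+1) = 3*m+3 by ring]
      rw [show 3*m+2 = 3*m+2 from rfl]
      linear_combination ih + h3
  have hA0 : (∑ x ∈ Finset.range p, (((2*x).choose x : ℕ) : ZMod q))
      = ((AbN p 0 : ℕ) : ZMod q) := by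
    rw [AbN]
    push_cast
    rfl
  rw [hA0]
  -- the key character sum
  have hK := Eis.key_sum (R := ZMod q) p hodd
  -- blocks evaluation
  have hblocks : ∀ t : ℕ,
      (∑ k ∈ Finset.range (3*t),
        ((p.choose k : ℕ) : ZMod q) * (if k % 3 = 1 then 1 else if k % 3 = 2 then -1 else 0))
      = (∑ i ∈ Finset.range t, ((p.choose (3*i+1) : ℕ) : ZMod q))
        - ∑ i ∈ Finset.range t, ((p.choose (3*i+2) : ℕ) : ZMod q) := by
    intro t
    rw [sum_blocks]
    rw [← Finset.sum_sub_distrib]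
    apply Finset.sum_congr rfl
    intro i _
    have e0 : (3*i) % 3 = 0 := by omega
    have e1 : (3*i+1) % 3 = 1 := by omega
    have e2 : (3*i+2) % 3 = 2 := by omega
    rw [e0, e1, e2]
    norm_num
    ring
  rcases hp3 with h1 | h1
  · -- p ≡ 1 (mod 3)
    set m := (p-1)/3 with hmdef
    have hm : 3*m = p - 1 := by omega
    have hKval : (if p % 3 = 1 then (1 : ZMod q) else if p % 3 = 2 then -1 else 0) = 1 := by
      rw [if_pos h1]
    rw [hKval] at hK
    have hsplit : ∑ k ∈ Finset.range (p+1),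
        ((p.choose k : ℕ) : ZMod q) * (if k % 3 = 1 then 1 else if k % 3 = 2 then -1 else 0)
        = (∑ k ∈ Finset.range (3*m),
            ((p.choose k : ℕ) : ZMod q) * (if k % 3 = 1 then 1 else if k % 3 = 2 then -1 else 0))
          + ((p.choose (3*m) : ℕ) : ZMod q) * (if (3*m) % 3 = 1 then 1 else if (3*m) % 3 = 2 then -1 else 0)
          + ((p.choose (3*m+1) : ℕ) : ZMod q) * (if (3*m+1) % 3 = 1 then 1 else if (3*m+1) % 3 = 2 then -1 else 0) := by
      rw [show p+1 = (3*m+1)+1 by omega, Finset.sum_range_succ, Finset.sum_range_succ]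
    rw [hsplit, hblocks] at hK
    have e0 : (3*m) % 3 = 0 := by omega
    have e1 : (3*m+1) % 3 = 1 := by omega
    rw [e0, e1] at hK
    norm_num at hK
    rw [show 3*m+1 = p by omega, Nat.choose_self] at hK
    norm_num at hK
    -- hK : u - v + 1 = 1  (roughly)
    -- boundary
    have hbound : AbN p (p-1) = 1 := by
      rw [AbN, show Finset.range p = Finset.range ((p-1)+1) by rw [show (p-1)+1 = p by omega],
        Finset.sum_range_succ]
      have hz : ∑ k ∈ Finset.range (p-1), (2*k).choose (k+(p-1)) = 0 := by
        apply Finset.sum_eq_zero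
        intro k hk
        rw [Finset.mem_range] at hk
        exact Nat.choose_eq_zero_of_lt (by omega)
      rw [hz, show 2*(p-1) = (p-1)+(p-1) by ring, Nat.choose_self]
    have htele := tele m
    rw [hm, hbound] at htele
    have hE1 : ∀ i ∈ Finset.range m,
        (((2*p).choose (p+(3*i+1)) : ℕ) : ZMod q) = 2 * ((p.choose (3*i+1) : ℕ) : ZMod q) := by
      intro i hi
      rw [Finset.mem_range] at hi
      exact eps2c hp (by omega) (by omega)
    have hE2 : ∀ i ∈ Finset.range m,
        (((2*p).choose (p+(3*i+2)) : ℕ) : ZMod q) = 2 * ((p.choose (3*i+2) : ℕ) : ZMod q) := by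
      intro i hi
      rw [Finset.mem_range] at hi
      exact eps2c hp (by omega) (by omega)
    rw [Finset.sum_congr rfl hE1, Finset.sum_congr rfl hE2, ← Finset.mul_sum, ← Finset.mul_sum] at htele
    have hchi : ((chi p : ℤ) : ZMod q) = 1 := by
      rw [chi, if_pos h1]
      norm_num
    rw [hchi]
    push_cast at htele hK ⊢
    linear_combination 2 * hK - htele
  · -- p ≡ 2 (mod 3)
    set m := (p+1)/3 with hmdef
    have hm : 3*m = p + 1 := by omega
    have hm2 : 2 ≤ m := by omega
    have hKval : (if p % 3 = 1 then (1 : ZMod q) else if p % 3 = 2 then -1 else 0) = -1 := by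
      rw [if_neg (by omega), if_pos h1]
    rw [hKval] at hK
    rw [show p+1 = 3*m by omega, hblocks] at hK
    -- hK : u - v = -1
    -- boundary
    have hbound : AbN p (p+1) = 0 := by
      rw [AbN]
      apply Finset.sum_eq_zero
      intro k hk
      rw [Finset.mem_range] at hk
      exact Nat.choose_eq_zero_of_lt (by omega)
    have htele := tele m
    rw [hm, hbound] at htele
    have hE1 : ∀ i ∈ Finset.range m,
        (((2*p).choose (p+(3*i+1)) : ℕ) : ZMod q) = 2 * ((p.choose (3*i+1) : ℕ) : ZMod q) := by
      intro i hi
      rw [Finset.mem_range] at hi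
      exact eps2c hp (by omega) (by omega)
    rw [Finset.sum_congr rfl hE1, ← Finset.mul_sum] at htele
    -- split the last term of the (3i+2) sums
    have hsplitE : ∑ i ∈ Finset.range m, (((2*p).choose (p+(3*i+2)) : ℕ) : ZMod q)
        = (∑ i ∈ Finset.range (m-1), (((2*p).choose (p+(3*i+2)) : ℕ) : ZMod q))
          + (((2*p).choose (p+(3*(m-1)+2)) : ℕ) : ZMod q) := by
      rw [show m = (m-1)+1 by omega, Finset.sum_range_succ]
      rw [show (m-1)+1-1 = m-1 by omega]
    have hlastE : (((2*p).choose (p+(3*(m-1)+2)) : ℕ) : ZMod q) = 1 := by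
      rw [show p+(3*(m-1)+2) = 2*p by omega, Nat.choose_self]
      norm_num
    have hE2 : ∀ i ∈ Finset.range (m-1),
        (((2*p).choose (p+(3*i+2)) : ℕ) : ZMod q) = 2 * ((p.choose (3*i+2) : ℕ) : ZMod q) := by
      intro i hi
      rw [Finset.mem_range] at hi
      exact eps2c hp (by omega) (by omega)
    rw [hsplitE, hlastE, Finset.sum_congr rfl hE2, ← Finset.mul_sum] at htele
    have hsplitv : ∑ i ∈ Finset.range m, ((p.choose (3*i+2) : ℕ) : ZMod q)
        = (∑ i ∈ Finset.range (m-1), ((p.choose (3*i+2) : ℕ) : ZMod q))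
          + ((p.choose (3*(m-1)+2) : ℕ) : ZMod q) := by
      rw [show m = (m-1)+1 by omega, Finset.sum_range_succ]
      rw [show (m-1)+1-1 = m-1 by omega]
    have hlastv : ((p.choose (3*(m-1)+2) : ℕ) : ZMod q) = 1 := by
      rw [show 3*(m-1)+2 = p by omega, Nat.choose_self]
      norm_num
    rw [hsplitv, hlastv] at hK
    have hchi : ((chi p : ℤ) : ZMod q) = -1 := by
      rw [chi, if_neg (by omega), if_pos h1]
      norm_num
    rw [hchi]
    push_cast at htele hK ⊢
    linear_combination 2 * hK - htele
end

section
/- Let p ≥ 5 be a prime. Then Σ_{k=0}^{p-1} binomial(2k, k) ≡ χ(p) (mod p²), where the congruence is between integers. -/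
open Polynomial Finset

private def dd (p j : ℕ) : ℤ :=
  ((2 * p).choose j : ℤ) - (if j = 0 then 0 else ((2 * p).choose (j - 1) : ℤ))

private def HH (p j : ℕ) : ℤ :=
  ∑ m ∈ Finset.range (j + 1), if m % 3 = j % 3 then dd p m else 0

private noncomputable def GG (p : ℕ) : Polynomial ℤ :=
  ∑ i ∈ Finset.range p, ((1 + X) ^ 2) ^ i * X ^ (p - 1 - i)

private def vv (p m : ℕ) : ℤ :=
  2 * ((p.choose m : ℤ) - if m = 0 then 0 else (p.choose (m - 1) : ℤ))

private def cr (m : ℕ) : ℤ := if m = 0 then -1 else if m = 1 then 1 else 0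

private def uu (n r : ℕ) : ℤ :=
  ∑ m ∈ Finset.range (n + 1), if m % 3 = r then (n.choose m : ℤ) else 0

private def XX (s : ℕ) : ℤ :=
  if s = 0 then 1 else if s = 1 then 0 else if s = 2 then -1
  else if s = 3 then -1 else if s = 4 then 0 else 1

private def YY (s : ℕ) : ℤ :=
  if s = 0 then 0 else if s = 1 then 1 else if s = 2 then 1
  else if s = 3 then 0 else if s = 4 then -1 else -1

private lemma HH_lt3 (p j : ℕ) (h : j < 3) : HH p j = dd p j := by
  interval_cases j <;> simp [HH, Finset.sum_range_succ]

private lemma HH_step (p m : ℕ) : HH p (m + 3) = HH p m + dd p (m + 3) := by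
  unfold HH
  rw [show m + 3 + 1 = (m + 1) + 1 + 1 + 1 by omega]
  rw [Finset.sum_range_succ, Finset.sum_range_succ, Finset.sum_range_succ]
  rw [if_pos rfl, if_neg (by omega), if_neg (by omega)]
  have : ∀ x ∈ Finset.range (m + 1), (if x % 3 = (m + 3) % 3 then dd p x else 0)
      = (if x % 3 = m % 3 then dd p x else 0) := by
    intro x _
    congr 1
    simp [Nat.add_mod_right]
  rw [Finset.sum_congr rfl this]
  ring

private lemma GG_mul (p : ℕ) :
    GG p * (X ^ 3 - 1) = (((1:ℤ[X]) + X) ^ (2 * p) - X ^ p) * (X - 1) := by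
  have h := geom_sum₂_mul (((1:ℤ[X]) + X) ^ 2) X p
  have e : ((X:ℤ[X]) ^ 3 - 1) = (((1:ℤ[X]) + X) ^ 2 - X) * (X - 1) := by ring
  rw [e, ← mul_assoc]
  unfold GG
  rw [h, pow_mul]

private lemma GG_coeff_rec (p j : ℕ) (hj : j < p) :
    (GG p).coeff j = (if 3 ≤ j then (GG p).coeff (j - 3) else 0) + dd p j := by
  have h := congrArg (fun q => Polynomial.coeff q j) (GG_mul p)
  rw [mul_sub, mul_one, Polynomial.coeff_sub] at h
  rw [Polynomial.coeff_mul_X_pow'] at h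
  rw [mul_sub, mul_one, Polynomial.coeff_sub] at h
  rw [show ((((1:ℤ[X]) + X) ^ (2 * p) - X ^ p) * X)
      = (((1:ℤ[X]) + X) ^ (2 * p) - X ^ p) * X ^ 1 by rw [pow_one]] at h
  rw [Polynomial.coeff_mul_X_pow'] at h
  rw [Polynomial.coeff_sub, Polynomial.coeff_sub] at h
  rw [coeff_one_add_X_pow, coeff_one_add_X_pow] at h
  rw [Polynomial.coeff_X_pow, Polynomial.coeff_X_pow] at h
  unfold dd
  split_ifs at h ⊢ with h3 h1 hp1 hp2 h0 <;> omega

private lemma GG_coeff_top (p : ℕ) (hp1 : 1 ≤ p) :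
    (GG p).coeff (p - 1) = ∑ k ∈ Finset.range p, ((2 * k).choose k : ℤ) := by
  unfold GG
  rw [Polynomial.finset_sum_coeff]
  refine Finset.sum_congr rfl fun i hi => ?_
  rw [Finset.mem_range] at hi
  rw [← pow_mul, Polynomial.coeff_mul_X_pow', if_pos (by omega)]
  rw [show p - 1 - (p - 1 - i) = i by omega, coeff_one_add_X_pow]

private lemma HH_eq (p : ℕ) : ∀ j, j < p → (GG p).coeff j = HH p j := by
  intro j
  induction j using Nat.strong_induction_on with
  | _ j ih =>
    intro hj
    rcases Nat.lt_or_ge j 3 with h3 | h3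
    · rw [GG_coeff_rec p j hj, if_neg (by omega), HH_lt3 p j h3, zero_add]
    · obtain ⟨m, rfl⟩ : ∃ m, j = m + 3 := ⟨j - 3, by omega⟩
      rw [GG_coeff_rec p _ hj, if_pos (by omega), show m + 3 - 3 = m by omega,
        ih m (by omega) (by omega), HH_step]

private lemma uu_step (n r : ℕ) (hr : r < 3) :
    uu (n + 1) r = uu n r + uu n ((r + 2) % 3) := by
  unfold uu
  rw [Finset.sum_range_succ' (fun m => if m % 3 = r then ((n+1).choose m : ℤ) else 0)]
  have e1 : ∀ m, (if (m + 1) % 3 = r then (((n+1).choose (m+1) : ℕ) : ℤ) else 0)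
      = (if m % 3 = (r + 2) % 3 then (n.choose m : ℤ) else 0)
        + (if (m + 1) % 3 = r then (n.choose (m + 1) : ℤ) else 0) := by
    intro m
    rw [Nat.choose_succ_succ]
    simp only [Nat.succ_eq_add_one]
    push_cast
    split_ifs <;> omega
  rw [Finset.sum_congr rfl (fun m _ => e1 m), Finset.sum_add_distrib]
  have e2 : (∑ m ∈ Finset.range (n + 1), if (m + 1) % 3 = r then (n.choose (m+1) : ℤ) else 0)
      + (if 0 % 3 = r then (((n+1).choose 0 : ℕ) : ℤ) else 0)
      = ∑ m ∈ Finset.range (n + 1), if m % 3 = r then (n.choose m : ℤ) else 0 := by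
    rw [Finset.sum_range_succ' (fun m => if m % 3 = r then (n.choose m : ℤ) else 0)]
    rw [Finset.sum_range_succ]
    simp [Nat.choose_succ_self]
  linarith [e2]

private lemma uu_vals (n : ℕ) :
    uu n 0 - uu n 1 = XX (n % 6) ∧ uu n 1 - uu n 2 = YY (n % 6) := by
  induction n with
  | zero => simp [uu, XX, YY]
  | succ n ih =>
    obtain ⟨hx, hy⟩ := ih
    have h0 := uu_step n 0 (by norm_num)
    have h1 := uu_step n 1 (by norm_num)
    have h2 := uu_step n 2 (by norm_num)
    norm_num at h0 h1 h2
    have hs : n % 6 = 0 ∨ n % 6 = 1 ∨ n % 6 = 2 ∨ n % 6 = 3 ∨ n % 6 = 4 ∨ n % 6 = 5 := by omega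
    rcases hs with h | h | h | h | h | h <;>
      rw [h] at hx hy <;>
      rw [show (n+1) % 6 = (n % 6 + 1) % 6 by omega, h] <;>
      constructor <;>
      simp [XX, YY] at hx hy ⊢ <;>
      linarith

private lemma vand (p : ℕ) (hp : p.Prime) (j : ℕ) (h1 : 1 ≤ j) (h2 : j ≤ p - 1) :
    ((p : ℤ))^2 ∣ ((2 * p).choose j : ℤ) - 2 * (p.choose j : ℤ) := by
  have hp1 : 1 ≤ p := hp.one_lt.le.trans' (by omega)
  have hv : (2 * p).choose j = ∑ k ∈ Finset.range (j + 1), p.choose k * p.choose (j - k) := by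
    rw [two_mul, Nat.add_choose_eq, Finset.Nat.sum_antidiagonal_eq_sum_range_succ_mk]
  rw [hv]
  obtain ⟨j', rfl⟩ : ∃ j', j = j' + 1 := ⟨j - 1, by omega⟩
  push_cast
  rw [Finset.sum_range_succ]
  rw [Finset.sum_range_succ' (fun k => ((p.choose k : ℤ)) * (p.choose (j' + 1 - k) : ℤ))]
  simp only [Nat.choose_zero_right, Nat.sub_self, Nat.choose_self, Nat.sub_zero]
  push_cast
  have hmid : ((p:ℤ))^2 ∣ ∑ k ∈ Finset.range j',
      (p.choose (k+1) : ℤ) * (p.choose (j' + 1 - (k+1)) : ℤ) := by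
    apply Finset.dvd_sum
    intro k hk
    rw [Finset.mem_range] at hk
    have d1 : (p:ℤ) ∣ (p.choose (k+1) : ℤ) :=
      Int.natCast_dvd_natCast.mpr (hp.dvd_choose_self (by omega) (by omega))
    have d2 : (p:ℤ) ∣ (p.choose (j' + 1 - (k+1)) : ℤ) :=
      Int.natCast_dvd_natCast.mpr (hp.dvd_choose_self (by omega) (by omega))
    rw [sq]
    exact mul_dvd_mul d1 d2
  have e : (∑ k ∈ Finset.range j', (p.choose (k+1) : ℤ) * (p.choose (j' + 1 - (k+1)) : ℤ))
      + 1 * (p.choose (j' + 1) : ℤ) + (p.choose (j' + 1) : ℤ) * 1 - 2 * (p.choose (j'+1) : ℤ)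
      = ∑ k ∈ Finset.range j', (p.choose (k+1) : ℤ) * (p.choose (j' + 1 - (k+1)) : ℤ) := by ring
  convert hmid using 1
  rw [← e]
  ring_nf
  have hc : ∀ x ∈ Finset.range j', (p.choose (x+1) : ℤ) * (p.choose (j' - x) : ℤ)
      = (p.choose (x+1) : ℤ) * (p.choose (j' + 1 - (x+1)) : ℤ) := fun x _ => by
    rw [show j' + 1 - (x+1) = j' - x by omega]
  refine Finset.sum_congr rfl fun x _ => ?_
  rw [show 1 + j' - (1 + x) = j' - x by omega]

theorem stmt_16 (p : ℕ) (hp : p.Prime) (hp5 : 5 ≤ p) :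
    (∑ k ∈ Finset.range p, ((2 * k).choose k : ℤ)) ≡ chi p [ZMOD ((p : ℤ) ^ 2)] := by
  have hp2 : ¬ (2 ∣ p) := by
    intro h
    rcases (Nat.Prime.eq_one_or_self_of_dvd hp 2 h) with h2 | h2 <;> omega
  have hp3 : ¬ (3 ∣ p) := by
    intro h
    rcases (Nat.Prime.eq_one_or_self_of_dvd hp 3 h) with h2 | h2 <;> omega
  have hp6 : p % 6 = 1 ∨ p % 6 = 5 := by omega
  obtain ⟨q, rfl⟩ : ∃ q, p = q + 1 := ⟨p - 1, by omega⟩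
  have hq4 : 4 ≤ q := by omega
  -- the exact identity
  have hS : (∑ k ∈ Finset.range (q+1), ((2 * k).choose k : ℤ)) = HH (q+1) q := by
    rw [← GG_coeff_top (q+1) (by omega)]
    rw [show q + 1 - 1 = q from rfl]
    exact HH_eq (q+1) q (by omega)
  have hHH : HH (q+1) q = ∑ m ∈ Finset.range (q+1),
      (if m % 3 = q % 3 then dd (q+1) m else 0) := rfl
  -- termwise congruence
  have claim1 : ∀ m < q + 1, (((q:ℤ)+1))^2 ∣ dd (q+1) m - vv (q+1) m - cr m := by
    intro m hm
    rcases Nat.lt_or_ge m 2 with hm2 | hm2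
    · interval_cases m
      · simp [dd, vv, cr]
      · have e : dd (q+1) 1 - vv (q+1) 1 - cr 1 = 0 := by
          simp [dd, vv, cr, Nat.choose_one_right]
          push_cast
          ring
        rw [e]
        exact dvd_zero _
    · have h1 := vand (q+1) hp m (by omega) (by omega)
      have h2 := vand (q+1) hp (m-1) (by omega) (by omega)
      have e : dd (q+1) m - vv (q+1) m - cr m
          = (((2 * (q+1)).choose m : ℤ) - 2 * ((q+1).choose m : ℤ))
            - (((2 * (q+1)).choose (m-1) : ℤ) - 2 * ((q+1).choose (m-1) : ℤ)) := by
        simp only [dd, vv, cr, if_neg (by omega : ¬ m = 0), if_neg (by omega : ¬ m = 1)]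
        ring
      rw [e]
      push_cast at h1 h2 ⊢
      exact dvd_sub h1 h2
  -- sum of corrections
  have hT2 : (∑ m ∈ Finset.range (q+1), if m % 3 = q % 3 then cr m else 0)
      = - chi (q+1) := by
    have h2sub : (∑ m ∈ Finset.range (q+1), if m % 3 = q % 3 then cr m else 0)
        = ∑ m ∈ Finset.range 2, (if m % 3 = q % 3 then cr m else 0) := by
      symm
      apply Finset.sum_subset
      · intro x hx
        rw [Finset.mem_range] at *
        omega
      · intro x _ hx2
        rw [Finset.mem_range] at hx2
        have : cr x = 0 := by
          simp only [cr, if_neg (by omega : ¬ x = 0), if_neg (by omega : ¬ x = 1)]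
        simp [this]
    rw [h2sub, Finset.sum_range_succ, Finset.sum_range_succ, Finset.sum_range_zero]
    have hq3 : q % 3 = 0 ∨ q % 3 = 1 := by omega
    rcases hq3 with h | h
    · rw [if_pos (by omega), if_neg (by omega)]
      simp [cr, chi, show (q+1) % 3 = 1 by omega]
    · rw [if_neg (by omega), if_pos (by omega)]
      simp [cr, chi, show (q+1) % 3 = 2 by omega]
  -- sum of the 2*C(p,m) part
  have hT1 : (∑ m ∈ Finset.range (q+1), if m % 3 = q % 3 then vv (q+1) m else 0)
      = 2 * chi (q+1) := by
    have e1 : ∀ m ∈ Finset.range (q+1), (if m % 3 = q % 3 then vv (q+1) m else 0)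
        = 2 * (if m % 3 = q % 3 then ((q+1).choose m : ℤ) else 0)
          - 2 * (if m % 3 = q % 3 then
              (if m = 0 then (0:ℤ) else ((q+1).choose (m-1) : ℤ)) else 0) := by
      intro m _
      simp only [vv]
      split_ifs <;> ring
    rw [Finset.sum_congr rfl e1, Finset.sum_sub_distrib, ← Finset.mul_sum, ← Finset.mul_sum]
    have hA : (∑ m ∈ Finset.range (q+1), if m % 3 = q % 3 then ((q+1).choose m : ℤ) else 0)
        = uu (q+1) (q % 3) := by
      unfold uu
      rw [Finset.sum_range_succ (fun m => if m % 3 = q % 3 then ((q+1).choose m : ℤ) else 0) (q+1)]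
      rw [if_neg (by omega : ¬ (q+1) % 3 = q % 3), add_zero]
    have hB : (∑ m ∈ Finset.range (q+1), if m % 3 = q % 3 then
          (if m = 0 then (0:ℤ) else ((q+1).choose (m-1) : ℤ)) else 0)
        = uu (q+1) ((q+2) % 3) := by
      rw [Finset.sum_range_succ' (fun m => if m % 3 = q % 3 then
          (if m = 0 then (0:ℤ) else ((q+1).choose (m-1) : ℤ)) else 0)]
      have e2 : ∀ m ∈ Finset.range q, (if (m+1) % 3 = q % 3 then
            (if m + 1 = 0 then (0:ℤ) else ((q+1).choose (m+1-1) : ℤ)) else 0)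
          = (if m % 3 = (q+2) % 3 then ((q+1).choose m : ℤ) else 0) := by
        intro m _
        simp only [Nat.add_sub_cancel, if_neg (by omega : ¬ m + 1 = 0)]
        have hc : ((m+1) % 3 = q % 3) ↔ (m % 3 = (q+2) % 3) := by omega
        split_ifs with ha hb hb
        · rfl
        · exact absurd (hc.mp ha) hb
        · exact absurd (hc.mpr hb) ha
        · rfl
      rw [Finset.sum_congr rfl e2]
      unfold uu
      rw [show q + 1 + 1 = q + 2 from rfl]
      rw [Finset.sum_range_succ, Finset.sum_range_succ]
      rw [if_neg (by omega : ¬ (q+1) % 3 = (q+2) % 3),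
        if_neg (by omega : ¬ q % 3 = (q+2) % 3)]
      simp
    rw [hA, hB]
    obtain ⟨hx, hy⟩ := uu_vals (q+1)
    rcases hp6 with h | h
    · rw [show q % 3 = 0 by omega, show (q+2) % 3 = 2 by omega]
      rw [show (q+1) % 6 = 1 by omega] at hx hy
      simp only [XX, YY] at hx hy
      norm_num at hx hy
      simp only [chi, show (q+1) % 3 = 1 by omega, if_pos]
      norm_num
      linarith
    · rw [show q % 3 = 1 by omega, show (q+2) % 3 = 0 by omega]
      rw [show (q+1) % 6 = 5 by omega] at hx hy
      simp only [XX, YY] at hx hy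
      norm_num at hx hy
      simp only [chi, show (q+1) % 3 = 2 by omega]
      norm_num
      linarith
  -- assembly
  have key : (((q:ℤ)+1))^2 ∣ ∑ m ∈ Finset.range (q+1),
      (if m % 3 = q % 3 then dd (q+1) m - vv (q+1) m - cr m else 0) := by
    apply Finset.dvd_sum
    intro m hm
    rw [Finset.mem_range] at hm
    split_ifs
    · exact claim1 m hm
    · exact dvd_zero _
  have esum : (∑ m ∈ Finset.range (q+1),
        (if m % 3 = q % 3 then dd (q+1) m - vv (q+1) m - cr m else 0))
      = (∑ m ∈ Finset.range (q+1), if m % 3 = q % 3 then dd (q+1) m else 0)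
        - (∑ m ∈ Finset.range (q+1), if m % 3 = q % 3 then vv (q+1) m else 0)
        - (∑ m ∈ Finset.range (q+1), if m % 3 = q % 3 then cr m else 0) := by
    rw [← Finset.sum_sub_distrib, ← Finset.sum_sub_distrib]
    refine Finset.sum_congr rfl fun m _ => ?_
    split_ifs <;> ring
  rw [esum, hT1, hT2, ← hHH, ← hS] at key
  have key2 : (((q:ℤ)+1))^2 ∣ (∑ k ∈ Finset.range (q+1), ((2 * k).choose k : ℤ)) - chi (q+1) := by
    have e3 : (∑ k ∈ Finset.range (q+1), ((2 * k).choose k : ℤ)) - chi (q+1)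
        = (∑ k ∈ Finset.range (q+1), ((2 * k).choose k : ℤ)) - 2 * chi (q+1) - (- chi (q+1)) := by
      ring
    rw [e3]
    exact key
  refine Int.modEq_iff_dvd.mpr ?_
  have e4 : chi (q+1) - (∑ k ∈ Finset.range (q+1), ((2 * k).choose k : ℤ))
      = -((∑ k ∈ Finset.range (q+1), ((2 * k).choose k : ℤ)) - chi (q+1)) := by ring
  rw [e4]
  refine dvd_neg.mpr ?_
  push_cast
  exact key2
end
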